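/- Let μ⁻ be given by a 2-additive decomposition. Then μ⁻(C,D) ≤ μ⁻(C,D∪{j}) holds for all j ∈ J and all (C,D∪{j}) ∈ P(J) with j ∉ D if and only if a_j⁻ + Σ_{k∈D} a_{jk}⁻ + Σ_{k∈C} a⁻_{k|j} ≥ 0 for all j ∈ J and all (C,D∪{j}) ∈ P(J) with j ∉ D; indeed, μ⁻(C,D∪{j}) − μ⁻(C,D) = a_j⁻ + Σ_{k∈D} a_{jk}⁻ + Σ_{k∈C} a⁻_{k|j} for every such j, C, D. -/

import Mathlib

/-- Sum of a symmetric coefficient family over the unordered pairs `{j,k} ⊆ C`, `j ≠ k`. -/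
noncomputable def pairSum {n : ℕ} (a : Fin n → Fin n → ℝ) (C : Finset (Fin n)) : ℝ :=
  (∑ p ∈ C.offDiag, a p.1 p.2) / 2

/-- `μ⁺(C,D) = Σ_{j∈C} a_j⁺ + Σ_{{j,k}⊆C} a_{jk}⁺ + Σ_{j∈C,k∈D} a⁺_{j|k}`. -/
noncomputable def muPlus {n : ℕ} (ap : Fin n → ℝ) (aps apo : Fin n → Fin n → ℝ)
    (C D : Finset (Fin n)) : ℝ :=
  ∑ j ∈ C, ap j + pairSum aps C + ∑ j ∈ C, ∑ k ∈ D, apo j k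

/-- `μ⁻(C,D) = Σ_{j∈D} a_j⁻ + Σ_{{j,k}⊆D} a_{jk}⁻ + Σ_{j∈C,k∈D} a⁻_{j|k}`. -/
noncomputable def muMinus {n : ℕ} (am : Fin n → ℝ) (ams amo : Fin n → Fin n → ℝ)
    (C D : Finset (Fin n)) : ℝ :=
  ∑ j ∈ D, am j + pairSum ams D + ∑ j ∈ C, ∑ k ∈ D, amo j k

lemma pairSum_insert {n : ℕ} (a : Fin n → Fin n → ℝ) (hsym : ∀ j k, a j k = a k j)
    {j : Fin n} {D : Finset (Fin n)} (hj : j ∉ D) :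
    pairSum a (insert j D) = pairSum a D + ∑ k ∈ D, a j k := by
  unfold pairSum
  have hod := Finset.offDiag_insert (a := j) (s := D) hj
  rw [hod]
  rw [Finset.sum_union, Finset.sum_union]
  · rw [Finset.singleton_product, Finset.product_singleton,
      Finset.sum_map, Finset.sum_map]
    simp only [Function.Embedding.coeFn_mk]
    have : ∑ x ∈ D, a x j = ∑ x ∈ D, a j x := by
      exact Finset.sum_congr rfl fun x _ => hsym x j
    rw [this]; ring
  · rw [Finset.disjoint_left]
    rintro ⟨x, y⟩ hxy h2
    simp only [Finset.mem_product, Finset.mem_singleton, Finset.mem_offDiag] at hxy h2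
    exact hj (h2.1 ▸ hxy.1)
  · rw [Finset.disjoint_left]
    rintro ⟨x, y⟩ hxy h2
    rw [Finset.mem_union] at hxy
    simp only [Finset.mem_product, Finset.mem_singleton] at h2
    rcases hxy with h1 | h1
    · exact hj (h2.2 ▸ (Finset.mem_offDiag.mp h1).2.1)
    · simp only [Finset.mem_product, Finset.mem_singleton] at h1
      exact hj (h1.1 ▸ h2.1)

theorem stmt_15 {n : ℕ} (hn : 1 ≤ n)
    (am : Fin n → ℝ) (ams amo : Fin n → Fin n → ℝ)
    (ham : ∀ j, 0 ≤ am j)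
    (hsym : ∀ j k, ams j k = ams k j)
    (hamo : ∀ j k, j ≠ k → amo j k ≤ 0) :
    ((∀ (j : Fin n) (C D : Finset (Fin n)), j ∉ D → Disjoint C (insert j D) →
        muMinus am ams amo C D ≤ muMinus am ams amo C (insert j D)) ↔
      (∀ (j : Fin n) (C D : Finset (Fin n)), j ∉ D → Disjoint C (insert j D) →
        0 ≤ am j + ∑ k ∈ D, ams j k + ∑ k ∈ C, amo k j)) ∧
    (∀ (j : Fin n) (C D : Finset (Fin n)), j ∉ D → Disjoint C (insert j D) →
        muMinus am ams amo C (insert j D) - muMinus am ams amo C D =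
          am j + ∑ k ∈ D, ams j k + ∑ k ∈ C, amo k j) := by
  have key : ∀ (j : Fin n) (C D : Finset (Fin n)), j ∉ D → Disjoint C (insert j D) →
      muMinus am ams amo C (insert j D) - muMinus am ams amo C D =
        am j + ∑ k ∈ D, ams j k + ∑ k ∈ C, amo k j := by
    intro j C D hj _
    unfold muMinus
    rw [pairSum_insert ams hsym hj, Finset.sum_insert hj]
    have : ∑ i ∈ C, ∑ k ∈ insert j D, amo i k
        = ∑ i ∈ C, (amo i j + ∑ k ∈ D, amo i k) := by
      exact Finset.sum_congr rfl fun i _ => Finset.sum_insert hj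
    rw [this, Finset.sum_add_distrib]
    ring
  refine ⟨⟨fun h j C D hj hd => ?_, fun h j C D hj hd => ?_⟩, key⟩
  · have := h j C D hj hd
    linarith [key j C D hj hd]
  · linarith [key j C D hj hd, h j C D hj hd]
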